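/- In the setting above, if σ : Q → C^I is a continuous section of π_f and c ∈ C, then the set Q|_c is contractible in W: the map H(w,t) = f(σ(c,w)(1−t)) is a homotopy in W from the inclusion Q|_c ↪ W to the constant map at f(c). -/

import Mathlib

/-- If `σ` is a continuous section of `π_f` over `Q ⊆ C × W` and `c ∈ C`, then
`Q|_c` is contractible in `W`: the map `H(w,t) = f(σ(c,w)(1−t))` is a homotopy
in `W` from the inclusion `Q|_c ↪ W` to the constant map at `f(c)`. -/
theorem slice_contractible_in_W
    {C W : Type*} [TopologicalSpace C] [TopologicalSpace W]
    (f : C → W) (hf : Continuous f)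
    (Q : Set (C × W)) (σ : Q → C(unitInterval, C)) (hσ : Continuous σ)
    (hσ0 : ∀ q : Q, σ q 0 = q.1.1) (hσ1 : ∀ q : Q, f (σ q 1) = q.1.2)
    (c : C) :
    Continuous (fun p : {w : W // (c, w) ∈ Q} × unitInterval =>
        f (σ ⟨(c, p.1.1), p.1.2⟩ (unitInterval.symm p.2))) ∧
      (∀ w : {w : W // (c, w) ∈ Q}, f (σ ⟨(c, w.1), w.2⟩ (unitInterval.symm 0)) = w.1) ∧
      (∀ w : {w : W // (c, w) ∈ Q}, f (σ ⟨(c, w.1), w.2⟩ (unitInterval.symm 1)) = f c) := by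
  refine ⟨?_, ?_, ?_⟩
  · apply hf.comp
    have h1 : Continuous fun p : {w : W // (c, w) ∈ Q} × unitInterval =>
        σ ⟨(c, p.1.1), p.1.2⟩ :=
      hσ.comp (by fun_prop)
    have h2 : Continuous fun p : {w : W // (c, w) ∈ Q} × unitInterval =>
        unitInterval.symm p.2 := by fun_prop
    exact continuous_eval.comp (h1.prodMk h2)
  · intro w
    have : unitInterval.symm 0 = 1 := by simp
    rw [this]
    exact hσ1 ⟨(c, w.1), w.2⟩
  · intro w
    have : unitInterval.symm 1 = 0 := by simp
    rw [this, hσ0 ⟨(c, w.1), w.2⟩]
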